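/- Let q = 2cos θ and let αᵢ(t) = cᵢt + dᵢ for i = 1,…,2n and α_{2n+1}(t) = 2t cos θ + Σ_{i=1}^n cᵢ((c_{n+i}/2)t² + d_{n+i}t) + c_{2n+1}, with q² + Σ_{i=1}^{2n} cᵢ² = 4. Then the slant condition α'_{2n+1} = 2cos θ + Σ_{i=1}^n α'ᵢ·α_{n+i} and the unit-speed condition Σ_{i=1}^{2n}(α'ᵢ)² = 4sin²θ hold for all t. -/

import Mathlib

open scoped BigOperators

/-- The curves of case (b) in the classification of pseudo-Hermitian magnetic
curves in `ℝ^{2n+1}(-3)` (with `q = 2cos θ`), given by `αᵢ = cᵢ t + dᵢ`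
(`i = 1, …, 2n`) and the stated `α_{2n+1}`, satisfy the slant condition
`α'_{2n+1} = 2cos θ + Σ α'ᵢ α_{n+i}` and the unit-speed condition
`Σ_{i=1}^{2n} (α'ᵢ)² = 4 sin²θ`, given `q² + Σ cᵢ² = 4`. -/
theorem magnetic_curve_parametrization_zero_lambda
    (n : ℕ) (θ q : ℝ)
    (c₁ c₂ : Fin n → ℝ) (clast : ℝ) (d₁ d₂ : Fin n → ℝ)
    (hq : q = 2 * Real.cos θ)
    (hnorm : q ^ 2 + ∑ i, ((c₁ i) ^ 2 + (c₂ i) ^ 2) = 4) :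
    let A : Fin n → ℝ → ℝ := fun i t => c₁ i * t + d₁ i
    let B : Fin n → ℝ → ℝ := fun i t => c₂ i * t + d₂ i
    let Z : ℝ → ℝ := fun t =>
      2 * t * Real.cos θ +
        (∑ i, c₁ i * (c₂ i / 2 * t ^ 2 + d₂ i * t)) + clast
    ∀ t : ℝ,
      deriv Z t = 2 * Real.cos θ + ∑ i, deriv (A i) t * B i t ∧
        (∑ i, ((deriv (A i) t) ^ 2 + (deriv (B i) t) ^ 2)) =
          4 * Real.sin θ ^ 2 := by
  intro A B Z t
  have hA : ∀ i, deriv (A i) t = c₁ i := by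
    intro i
    have h : HasDerivAt (A i) (c₁ i * 1) t :=
      ((hasDerivAt_id t).const_mul (c₁ i)).add_const (d₁ i)
    rw [h.deriv, mul_one]
  have hB : ∀ i, deriv (B i) t = c₂ i := by
    intro i
    have h : HasDerivAt (B i) (c₂ i * 1) t :=
      ((hasDerivAt_id t).const_mul (c₂ i)).add_const (d₂ i)
    rw [h.deriv, mul_one]
  constructor
  · have hterm : ∀ i : Fin n,
        HasDerivAt (fun t : ℝ => c₁ i * (c₂ i / 2 * t ^ 2 + d₂ i * t))
          (c₁ i * (c₂ i * t + d₂ i)) t := by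
      intro i
      have h1 : HasDerivAt (fun t : ℝ => c₂ i / 2 * t ^ 2 + d₂ i * t)
          (c₂ i * t + d₂ i) t := by
        have := ((hasDerivAt_pow 2 t).const_mul (c₂ i / 2)).add
          ((hasDerivAt_id t).const_mul (d₂ i))
        exact this.congr_deriv (by ring)
      exact h1.const_mul (c₁ i)
    have hlin : HasDerivAt (fun t : ℝ => 2 * t * Real.cos θ)
        (2 * Real.cos θ) t := by
      have := ((hasDerivAt_id t).const_mul 2).mul_const (Real.cos θ)
      exact this.congr_deriv (by ring)
    have hsum : HasDerivAt (fun t : ℝ => ∑ i, c₁ i * (c₂ i / 2 * t ^ 2 + d₂ i * t))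
        (∑ i, c₁ i * (c₂ i * t + d₂ i)) t :=
      HasDerivAt.fun_sum fun i _ => hterm i
    have hZ : HasDerivAt Z
        (2 * Real.cos θ + ∑ i, c₁ i * (c₂ i * t + d₂ i)) t :=
      (hlin.add hsum).add_const clast
    rw [hZ.deriv]
    simp only [hA, B]
  · have h4 : (∑ i, ((c₁ i) ^ 2 + (c₂ i) ^ 2)) = 4 - q ^ 2 := by linarith
    simp only [hA, hB, h4, hq]
    have := Real.sin_sq_add_cos_sq θ
    nlinarith [this]
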